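/- Suppose c: ℝ² → ℝ satisfies: for all x < x' in supp(μ) and y⁻ < y' < y⁺ in supp(ν), with λ = (y' − y⁻)/(y⁺ − y⁻), one has λ[c(x',y⁺) − c(x,y⁺)] + (1−λ)[c(x',y⁻) − c(x,y⁻)] − [c(x',y') − c(x,y')] > 0. Then any optimizer q* of the discrete martingale transport maximization problem is left-monotone. -/

import Mathlib

open Finset

set_option maxHeartbeats 2000000 in
/-- If the payoff `c` satisfies the generalized martingale Spence Mirrlees condition on the
supports of `μ` and `ν`, then any optimizer of the discrete martingale transport maximization
problem is left-monotone: no configuration `(x, y⁻), (x, y⁺), (x', y')` with `x < x'` and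
`y⁻ < y' < y⁺` is charged. -/
theorem stmt5 (N M : ℕ) (x : Fin N → ℝ) (y : Fin M → ℝ) (ω : Fin N → ℝ) (ϑ : Fin M → ℝ)
    (c : ℝ → ℝ → ℝ)
    (hω : ∀ j, 0 < ω j) (hϑ : ∀ i, 0 < ϑ i)
    (hω1 : ∑ j, ω j = 1) (hϑ1 : ∑ i, ϑ i = 1)
    (hSM : ∀ j j' : Fin N, ∀ im i' ip : Fin M, x j < x j' →
      y im < y i' → y i' < y ip →
      0 < (y i' - y im) / (y ip - y im) * (c (x j') (y ip) - c (x j) (y ip))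
          + (1 - (y i' - y im) / (y ip - y im)) * (c (x j') (y im) - c (x j) (y im))
          - (c (x j') (y i') - c (x j) (y i')))
    (q : Fin N → Fin M → ℝ)
    (hfeas : (∀ j i, 0 ≤ q j i) ∧ (∀ j, ∑ i, q j i = ω j) ∧ (∀ i, ∑ j, q j i = ϑ i) ∧
      (∀ j, ∑ i, q j i * (y i - x j) = 0))
    (hopt : ∀ q' : Fin N → Fin M → ℝ,
      ((∀ j i, 0 ≤ q' j i) ∧ (∀ j, ∑ i, q' j i = ω j) ∧ (∀ i, ∑ j, q' j i = ϑ i) ∧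
        (∀ j, ∑ i, q' j i * (y i - x j) = 0)) →
      ∑ j, ∑ i, q' j i * c (x j) (y i) ≤ ∑ j, ∑ i, q j i * c (x j) (y i)) :
    ∀ j j' : Fin N, ∀ im i' ip : Fin M, x j < x j' → y im < y i' → y i' < y ip →
      0 < q j im → 0 < q j ip → ¬ 0 < q j' i' := by
  intro j j' im i' ip hx hym hyp hqm hqp hq'
  obtain ⟨hq0, hrow, hcol, hmart⟩ := hfeas
  set lam : ℝ := (y i' - y im) / (y ip - y im) with hlam
  have hdy : 0 < y ip - y im := by linarith
  have hlam0 : 0 < lam := div_pos (by linarith) hdy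
  have hlam1 : lam < 1 := by
    rw [hlam, div_lt_one hdy]; linarith
  have hlamy : (1 - lam) * y im + lam * y ip = y i' := by
    rw [hlam]; linear_combination div_mul_cancel₀ (y i' - y im) hdy.ne'
  -- distinctness
  have hjj' : j ≠ j' := by intro h; rw [h] at hx; exact lt_irrefl _ hx
  have him1 : im ≠ i' := by intro h; rw [h] at hym; exact lt_irrefl _ hym
  have hip1 : ip ≠ i' := by intro h; rw [h] at hyp; exact lt_irrefl _ hyp
  have himp : im ≠ ip := by intro h; rw [h] at hdy; simp at hdy
  -- the perturbation size
  set ε : ℝ := min (min (q j im / (1 - lam)) (q j ip / lam)) (q j' i') with hεdef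
  have hε : 0 < ε := by
    refine lt_min (lt_min ?_ ?_) hq'
    · exact div_pos hqm (by linarith)
    · exact div_pos hqp hlam0
  have hε1 : ε * (1 - lam) ≤ q j im := by
    have h1 : ε ≤ q j im / (1 - lam) := le_trans (min_le_left _ _) (min_le_left _ _)
    rw [le_div_iff₀ (by linarith)] at h1; linarith
  have hε2 : ε * lam ≤ q j ip := by
    have h1 : ε ≤ q j ip / lam := le_trans (min_le_left _ _) (min_le_right _ _)
    rw [le_div_iff₀ hlam0] at h1; linarith
  have hε3 : ε ≤ q j' i' := min_le_right _ _
  -- the perturbation direction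
  set e : Fin N → ℝ := fun a => (if a = j then 1 else 0) - (if a = j' then 1 else 0) with he
  set f : Fin M → ℝ := fun b =>
    (if b = i' then 1 else 0) - (1 - lam) * (if b = im then 1 else 0)
      - lam * (if b = ip then 1 else 0) with hf
  set Q : Fin N → Fin M → ℝ := fun a b => q a b + ε * (e a * f b) with hQ
  have hesum : ∑ a, e a = 0 := by
    simp [he, Finset.sum_sub_distrib]
  have hkey : ∀ g : Fin M → ℝ, ∑ b, f b * g b = g i' - (1 - lam) * g im - lam * g ip := by
    intro g
    have : ∀ b, f b * g b = (if b = i' then g i' else 0)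
        - (1 - lam) * (if b = im then g im else 0) - lam * (if b = ip then g ip else 0) := by
      intro b
      by_cases h1 : b = i'
      · subst h1; simp [hf, Ne.symm him1, Ne.symm hip1]
      · by_cases h2 : b = im
        · subst h2; simp [hf, him1, himp]; ring
        · by_cases h3 : b = ip
          · subst h3; simp [hf, hip1, Ne.symm himp]
          · simp [hf, h1, h2, h3]
    simp only [this, Finset.sum_sub_distrib, ← Finset.mul_sum]
    simp
  have hfsum : ∑ b, f b = 0 := by
    have := hkey (fun _ => (1 : ℝ))
    simpa using this
  -- feasibility of Q
  have hQ0 : ∀ a b, 0 ≤ Q a b := by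
    intro a b
    have hqab := hq0 a b
    by_cases haj : a = j
    · subst haj
      have heₐ : e a = 1 := by simp [he, hjj']
      by_cases hb1 : b = i'
      · subst hb1
        have : f b = 1 := by simp [hf, Ne.symm him1, Ne.symm hip1]
        rw [hQ]; simp only [heₐ, this]; nlinarith
      · by_cases hb2 : b = im
        · subst hb2
          have : f b = -(1 - lam) := by simp [hf, him1, himp]
          rw [hQ]; simp only [heₐ, this]; nlinarith
        · by_cases hb3 : b = ip
          · subst hb3
            have : f b = -lam := by simp [hf, hip1, Ne.symm himp]
            rw [hQ]; simp only [heₐ, this]; nlinarith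
          · have : f b = 0 := by simp [hf, hb1, hb2, hb3]
            rw [hQ]; simp only [heₐ, this]; nlinarith
    · by_cases haj' : a = j'
      · subst haj'
        have heₐ : e a = -1 := by simp [he, Ne.symm hjj']
        by_cases hb1 : b = i'
        · subst hb1
          have : f b = 1 := by simp [hf, Ne.symm him1, Ne.symm hip1]
          rw [hQ]; simp only [heₐ, this]; nlinarith
        · by_cases hb2 : b = im
          · subst hb2
            have : f b = -(1 - lam) := by simp [hf, him1, himp]
            rw [hQ]; simp only [heₐ, this]; nlinarith
          · by_cases hb3 : b = ip
            · subst hb3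
              have : f b = -lam := by simp [hf, hip1, Ne.symm himp]
              rw [hQ]; simp only [heₐ, this]; nlinarith
            · have : f b = 0 := by simp [hf, hb1, hb2, hb3]
              rw [hQ]; simp only [heₐ, this]; nlinarith
      · have heₐ : e a = 0 := by simp [he, haj, haj']
        rw [hQ]; simp only [heₐ]; nlinarith
  have hQrow : ∀ a, ∑ b, Q a b = ω a := by
    intro a
    rw [hQ]
    simp only [Finset.sum_add_distrib, hrow a]
    have : ∑ b, ε * (e a * f b) = ε * e a * ∑ b, f b := by
      rw [Finset.mul_sum]; congr 1; ext b; ring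
    simp [this, hfsum]
  have hQcol : ∀ b, ∑ a, Q a b = ϑ b := by
    intro b
    rw [hQ]
    simp only [Finset.sum_add_distrib, hcol b]
    have : ∑ a, ε * (e a * f b) = ε * f b * ∑ a, e a := by
      rw [Finset.mul_sum]; congr 1; ext a; ring
    simp [this, hesum]
  have hQmart : ∀ a, ∑ b, Q a b * (y b - x a) = 0 := by
    intro a
    rw [hQ]
    simp only [add_mul, Finset.sum_add_distrib, hmart a]
    have h1 : ∑ b, ε * (e a * f b) * (y b - x a) = ε * e a * ∑ b, f b * (y b - x a) := by
      rw [Finset.mul_sum]; congr 1; ext b; ring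
    rw [h1, hkey (fun b => y b - x a)]
    have : y i' - x a - (1 - lam) * (y im - x a) - lam * (y ip - x a) = 0 := by
      nlinarith [hlamy]
    rw [this]; ring
  -- objective improvement
  have hobj : ∑ a, ∑ b, Q a b * c (x a) (y b)
      = (∑ a, ∑ b, q a b * c (x a) (y b))
        + ε * ((c (x j) (y i') - (1 - lam) * c (x j) (y im) - lam * c (x j) (y ip))
          - (c (x j') (y i') - (1 - lam) * c (x j') (y im) - lam * c (x j') (y ip))) := by
    rw [hQ]
    simp only [add_mul, Finset.sum_add_distrib]
    congr 1
    have h1 : ∀ a, ∑ b, ε * (e a * f b) * c (x a) (y b)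
        = ε * (e a * (c (x a) (y i') - (1 - lam) * c (x a) (y im) - lam * c (x a) (y ip))) := by
      intro a
      have h2 : ∑ b, ε * (e a * f b) * c (x a) (y b)
          = ε * e a * ∑ b, f b * c (x a) (y b) := by
        rw [Finset.mul_sum]; congr 1; ext b; ring
      rw [h2, hkey (fun b => c (x a) (y b))]; ring
    simp only [h1, ← Finset.mul_sum]
    have h3 : ∑ a, e a * (c (x a) (y i') - (1 - lam) * c (x a) (y im) - lam * c (x a) (y ip))
        = (c (x j) (y i') - (1 - lam) * c (x j) (y im) - lam * c (x j) (y ip))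
          - (c (x j') (y i') - (1 - lam) * c (x j') (y im) - lam * c (x j') (y ip)) := by
      have : ∀ a, e a * (c (x a) (y i') - (1 - lam) * c (x a) (y im) - lam * c (x a) (y ip))
          = (if a = j then (c (x j) (y i') - (1 - lam) * c (x j) (y im) - lam * c (x j) (y ip)) else 0)
            - (if a = j' then (c (x j') (y i') - (1 - lam) * c (x j') (y im) - lam * c (x j') (y ip)) else 0) := by
        intro a
        by_cases h1 : a = j
        · subst h1; simp [he, hjj']
        · by_cases h2 : a = j'
          · subst h2; simp [he, Ne.symm hjj']
          · simp [he, h1, h2]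
      simp only [this, Finset.sum_sub_distrib]
      simp
    rw [h3]
  have hSMpos := hSM j j' im i' ip hx hym hyp
  have hbig : ∑ a, ∑ b, q a b * c (x a) (y b) < ∑ a, ∑ b, Q a b * c (x a) (y b) := by
    rw [hobj]
    have : 0 < ε * ((c (x j) (y i') - (1 - lam) * c (x j) (y im) - lam * c (x j) (y ip))
        - (c (x j') (y i') - (1 - lam) * c (x j') (y im) - lam * c (x j') (y ip))) := by
      apply mul_pos hε
      rw [hlam] at *
      nlinarith [hSMpos]
    linarith
  exact absurd (hopt Q ⟨hQ0, hQrow, hQcol, hQmart⟩) (not_le.mpr hbig)
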